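/- For every reactive Turing machine there exists a queue automaton whose process graph is branching bisimilar to the process graph associated with the RTM. -/

import Mathlib

/-- A labelled transition system with silent action `τ` modelled as `none`. -/
structure LTS (S A : Type) where
  tr : S → Option A → S → Prop
  fin : S → Prop

/-- Zero or more τ-steps. -/
def LTS.tauStar {S A : Type} (L : LTS S A) : S → S → Prop :=
  Relation.ReflTransGen (fun s t => L.tr s none t)

/-- `s →(a) t` : either `s →a t`, or `a = τ` and `s = t`. -/
def LTS.optStep {S A : Type} (L : LTS S A) (s : S) (a : Option A) (t : S) : Prop :=
  L.tr s a t ∨ (a = none ∧ s = t)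

/-- A symmetric relation `R` is a strong bisimulation. -/
def IsStrongBisim {S A : Type} (L : LTS S A) (R : S → S → Prop) : Prop :=
  (∀ s t, R s t → R t s) ∧
  (∀ s t, R s t →
    (∀ a s', L.tr s a s' → ∃ t', L.tr t a t' ∧ R s' t') ∧
    (L.fin s → L.fin t))

/-- Strong bisimilarity: related by some strong bisimulation. -/
def Bisim {S A : Type} (L : LTS S A) (s t : S) : Prop :=
  ∃ R, IsStrongBisim L R ∧ R s t

/-- A symmetric relation `R` is a branching bisimulation. -/
def IsBranchingBisim {S A : Type} (L : LTS S A) (R : S → S → Prop) : Prop :=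
  (∀ s t, R s t → R t s) ∧
  (∀ s t, R s t →
    (∀ a s', L.tr s a s' →
      ∃ t'' t', L.tauStar t t'' ∧ L.optStep t'' a t' ∧ R s t'' ∧ R s' t') ∧
    (L.fin s → ∃ t', L.tauStar t t' ∧ L.fin t'))

/-- Branching bisimilarity: related by some branching bisimulation. -/
def BBisim {S A : Type} (L : LTS S A) (s t : S) : Prop :=
  ∃ R, IsBranchingBisim L R ∧ R s t

/-- A branching bisimulation between (the states of) two LTSs. -/
def IsBBisimSys {S₁ S₂ A : Type} (L₁ : LTS S₁ A) (L₂ : LTS S₂ A)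
    (R : S₁ → S₂ → Prop) : Prop :=
  (∀ s t, R s t →
    (∀ a s', L₁.tr s a s' →
      ∃ t'' t', L₂.tauStar t t'' ∧ L₂.optStep t'' a t' ∧ R s t'' ∧ R s' t') ∧
    (L₁.fin s → ∃ t', L₂.tauStar t t' ∧ L₂.fin t')) ∧
  (∀ s t, R s t →
    (∀ a t', L₂.tr t a t' →
      ∃ s'' s', L₁.tauStar s s'' ∧ L₁.optStep s'' a s' ∧ R s'' t ∧ R s' t') ∧
    (L₂.fin t → ∃ s', L₁.tauStar s s' ∧ L₁.fin s'))

/-- Two pointed process graphs are branching bisimilar. -/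
def BBisimSys {S₁ S₂ A : Type} (L₁ : LTS S₁ A) (s : S₁) (L₂ : LTS S₂ A) (t : S₂) : Prop :=
  ∃ R, IsBBisimSys L₁ L₂ R ∧ R s t

/-- The head condition of a queue-automaton transition: `ε`, `*`, or a datum. -/
inductive Head (D : Type) where
  | emp : Head D
  | star : Head D
  | data (d : D) : Head D

/-- A queue automaton. -/
structure QA (S A D : Type) where
  tr : S → Option A → Head D → List D → S → Prop
  init : S
  fin : S → Prop

/-- Effect of a transition with head condition `h` enqueueing `δ` on the queue
contents (head of the queue is the rightmost element, enqueueing prepends). -/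
inductive QStep {D : Type} : Head D → List D → List D → List D → Prop
  | emp (δ : List D) : QStep Head.emp δ [] δ
  | data (d : D) (δ ζ : List D) : QStep (Head.data d) δ (ζ ++ [d]) (δ ++ ζ)
  | star (δ ζ : List D) : QStep Head.star δ ζ (δ ++ ζ)

/-- The process graph of a queue automaton. -/
def QA.proc {S A D : Type} (Q : QA S A D) : LTS (S × List D) A where
  tr := fun c a c' => ∃ h δ, Q.tr c.1 a h δ c'.1 ∧ QStep h δ c.2 c'.2
  fin := fun c => Q.fin c.1

/-- The queue automaton has finitely many transitions. -/
def QA.FiniteTrans {S A D : Type} (Q : QA S A D) : Prop :=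
  Set.Finite {x : S × Option A × Head D × List D × S |
    Q.tr x.1 x.2.1 x.2.2.1 x.2.2.2.1 x.2.2.2.2}

/-- A reactive Turing machine; tape symbols are `Option D` with `none` the blank,
the `Bool` indicates the direction of the head move (`true` = right). -/
structure RTM (S A D : Type) where
  tr : S → Option A → Option D → Option D → Bool → S → Prop
  init : S
  fin : S → Prop

/-- Configurations: state, tape left of the head (nearest first), symbol under
the head, tape right of the head (nearest first); blanks at the extremes are
implicit. -/
def RTM.proc {S A D : Type} (M : RTM S A D) :
    LTS (S × List (Option D) × Option D × List (Option D)) A where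
  tr := fun c a c' => ∃ e,
    (M.tr c.1 a c.2.2.1 e false c'.1 ∧
      c'.2.1 = c.2.1.tail ∧ c'.2.2.1 = c.2.1.headD none ∧ c'.2.2.2 = e :: c.2.2.2) ∨
    (M.tr c.1 a c.2.2.1 e true c'.1 ∧
      c'.2.1 = e :: c.2.1 ∧ c'.2.2.1 = c.2.2.2.headD none ∧ c'.2.2.2 = c.2.2.2.tail)
  fin := fun c => M.fin c.1

/-- The RTM has finitely many transitions. -/
def RTM.FiniteTrans {S A D : Type} (M : RTM S A D) : Prop :=
  Set.Finite {x : S × Option A × Option D × Option D × Bool × S |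
    M.tr x.1 x.2.1 x.2.2.1 x.2.2.2.1 x.2.2.2.2.1 x.2.2.2.2.2}

/- ======================= auxiliary development ======================= -/

section RTMQueue

open List

variable {S A D : Type}

/-- Queue data alphabet: tape symbols plus two markers. -/
abbrev D2 (D : Type) : Type := Sum (Option D) Bool
/-- Queue automaton states. -/
abbrev S2 (S D : Type) : Type := Option (Sum (Sum S (S × Option D)) (S × D2 D))

/-- end-of-tape marker -/
def tri {D : Type} : D2 D := Sum.inr false
/-- head marker -/
def str {D : Type} : D2 D := Sum.inr true
/-- plain tape symbol -/
def bl {D : Type} (d : Option D) : D2 D := Sum.inl d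
/-- embed a tape segment -/
def mb {D : Type} (l : List (Option D)) : List (D2 D) := l.map Sum.inl

theorem tri_ne_str {D : Type} : (tri : D2 D) ≠ str := by simp [tri, str]
theorem bl_ne_str {D : Type} (d : Option D) : bl d ≠ str := by simp [bl, str]
theorem bl_ne_tri {D : Type} (d : Option D) : bl d ≠ tri := by simp [bl, tri]
theorem str_not_mem_mb {D : Type} (l : List (Option D)) : str ∉ mb l := by
  simp [mb, str]
theorem tri_not_mem_mb {D : Type} (l : List (Option D)) : tri ∉ mb l := by
  simp [mb, tri]
theorem mb_append {D : Type} (l l' : List (Option D)) : mb (l ++ l') = mb l ++ mb l' := by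
  simp [mb]

def nrm {S D : Type} (s : S) : S2 S D := some (Sum.inl (Sum.inl s))
def hld {S D : Type} (s : S) (d : Option D) : S2 S D := some (Sum.inl (Sum.inr (s, d)))
def skr {S D : Type} (s : S) (w : D2 D) : S2 S D := some (Sum.inr (s, w))

/-- transitions of the simulating queue automaton -/
inductive QT (M : RTM S A D) : S2 S D → Option A → Head (D2 D) → List (D2 D) → S2 S D → Prop
  | init : QT M none none Head.emp [tri, bl none] (nrm M.init)
  | lf {s a c e t} : M.tr s a c e false t →
      QT M (nrm s) a (Head.data (bl c)) [bl e] (nrm t)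
  | hlf {s a c e t} : M.tr s a c e false t →
      QT M (hld s c) a Head.star [bl e] (nrm t)
  | blf {s a e t} : M.tr s a none e false t →
      QT M (nrm s) a (Head.data tri) [str, bl none, bl e] (skr t tri)
  | rt {s a c e t} : M.tr s a c e true t →
      QT M (nrm s) a (Head.data (bl c)) [str] (skr t (bl e))
  | hrt {s a c e t} : M.tr s a c e true t →
      QT M (hld s c) a Head.star [str] (skr t (bl e))
  | brt {s a e t} : M.tr s a none e true t →
      QT M (nrm s) a (Head.data tri) [bl e, str] (skr t tri)
  | rot {s w x} : x ≠ str →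
      QT M (skr s w) none (Head.data x) [w] (skr s x)
  | cap {s d} : QT M (skr s (bl d)) none (Head.data str) [] (hld s d)
  | capb {s} : QT M (skr s tri) none (Head.data str) [tri] (hld s none)

def qfin (M : RTM S A D) : S2 S D → Prop
  | some (Sum.inl (Sum.inl s)) => M.fin s
  | some (Sum.inl (Sum.inr p)) => M.fin p.1
  | _ => False

def QQ (M : RTM S A D) : QA (S2 S D) A (D2 D) := ⟨QT M, none, qfin M⟩

/-- rotation (cyclic) equality of lists -/
def cyc {α : Type} (q w : List α) : Prop := ∃ u v, w = u ++ v ∧ q = v ++ u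

theorem cyc_refl {α : Type} (q : List α) : cyc q q := ⟨q, [], by simp, by simp⟩

theorem cyc_rot {α : Type} (u v : List α) : cyc (v ++ u) (u ++ v) := ⟨u, v, rfl, rfl⟩

theorem cyc_trans {α : Type} {a b c : List α} : cyc a b → cyc b c → cyc a c := by
  rintro ⟨u, v, rfl, rfl⟩ ⟨p, q, hc, hb⟩
  -- hb : u ++ v = q ++ p
  rcases List.append_eq_append_iff.1 hb with ⟨m, hm1, hm2⟩ | ⟨m, hm1, hm2⟩
  · -- q = u ++ m, v = m ++ p
    subst hm1; subst hm2
    exact ⟨p ++ u, m, by simp [hc], by simp⟩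
  · -- u = q ++ m, p = m ++ v
    subst hm1; subst hm2
    exact ⟨m, v ++ q, by simp [hc], by simp⟩

theorem cyc_count {α : Type} [DecidableEq α] {a b : List α} (h : cyc a b) (x : α) :
    a.count x = b.count x := by
  rcases h with ⟨u, v, rfl, rfl⟩
  simp [List.count_append]; omega

/-- alignment at the unique star -/
theorem cyc_align {α : Type} {st : α} {p q : List α} (hp : st ∉ p) (hq : st ∉ q)
    (h : cyc (st :: p) (st :: q)) : p = q := by
  rcases h with ⟨u, v, h1, h2⟩
  cases u with
  | nil =>
    simp only [List.nil_append] at h1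
    rw [← h1] at h2
    simpa using h2
  | cons x u' =>
    have hx : st = x := by
      have := congrArg List.head? h1; simpa using this
    rw [← hx] at h1 h2
    cases v with
    | nil =>
      simp only [List.nil_append] at h2
      have h1' : q = u' := by simpa using h1
      have h2' : p = u' := by simpa using h2
      rw [h1', h2']
    | cons y v' =>
      exfalso
      have hy : st = y := by
        have := congrArg List.head? h2; simpa using this
      rw [← hy] at h1
      have : q = u' ++ st :: v' := by simpa using h1
      exact hq (by simp [this])

/- ---------- encodings ---------- -/

variable {M : RTM S A D}

/-- canonical encoding: tape right part, end marker, reversed left part, head symbol -/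
def Enc (l : List (Option D)) (c : Option D) (r : List (Option D)) : List (D2 D) :=
  mb r ++ [tri] ++ mb l.reverse ++ [bl c]
/-- encoding with the head on a blank just past the left end -/
def Bq (r : List (Option D)) : List (D2 D) := mb r ++ [tri]
/-- encoding of a configuration whose head symbol is held in the state -/
def Hq (l r : List (Option D)) : List (D2 D) := mb r ++ [tri] ++ mb l.reverse
/-- rotation word during a seek phase (explicit head symbol) -/
def Wx (l : List (Option D)) (c : Option D) (r : List (Option D)) : List (D2 D) :=
  str :: bl c :: (mb r ++ [tri] ++ mb l.reverse)
/-- rotation word during a seek phase (implicit blank head, empty right part) -/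
def Wi (l : List (Option D)) : List (D2 D) := str :: tri :: mb l.reverse

/-- the branching bisimulation relation -/
inductive BRel (M : RTM S A D) :
    (S × List (Option D) × Option D × List (Option D)) → (S2 S D × List (D2 D)) → Prop
  | c0 : BRel M (M.init, [], none, []) (none, [])
  | c1 (s l c r) : BRel M (s, l, c, r) (nrm s, Enc l c r)
  | c2 (s r) : BRel M (s, [], none, r) (nrm s, Bq r)
  | c3 (s l c r) : BRel M (s, l, c, r) (hld s c, Hq l r)
  | c4 (s l c r w q) : w ≠ str → cyc (q ++ [w]) (Wx l c r) → BRel M (s, l, c, r) (skr s w, q)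
  | c5 (s l w q) : w ≠ str → cyc (q ++ [w]) (Wi l) → BRel M (s, l, none, []) (skr s w, q)

/- ---------- inversion helpers ---------- -/

theorem QStep_emp_inv {D' : Type} {δ q q' : List D'} (h : QStep Head.emp δ q q') :
    q = [] ∧ q' = δ := by cases h; exact ⟨rfl, rfl⟩

theorem QStep_data_inv {D' : Type} {d : D'} {δ q q' : List D'} (h : QStep (Head.data d) δ q q') :
    ∃ ζ, q = ζ ++ [d] ∧ q' = δ ++ ζ := by cases h; exact ⟨_, rfl, rfl⟩

theorem QStep_star_inv {D' : Type} {δ q q' : List D'} (h : QStep Head.star δ q q') :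
    q' = δ ++ q := by cases h; rfl

theorem snoc_inj {α : Type} {a b : α} {l m : List α} (h : l ++ [a] = m ++ [b]) :
    l = m ∧ a = b := by
  have h2 := List.append_inj' h (by simp)
  exact ⟨h2.1, by simpa using h2.2⟩

/- ---------- star alignment ---------- -/

theorem star_align {w : D2 D} {W₁ : List (D2 D)} (hW : str ∉ W₁)
    (hw : w ≠ str) {ζ : List (D2 D)} (hc : cyc ((ζ ++ [str]) ++ [w]) (str :: W₁)) :
    w :: ζ = W₁ := by
  haveI : DecidableEq (D2 D) := Classical.decEq _
  have h0 : W₁.count str = 0 := List.count_eq_zero.2 hW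
  have hcnt := cyc_count hc str
  simp [List.count_append, List.count_cons, Ne.symm hw, h0, beq_iff_eq] at hcnt
  have hζ : str ∉ ζ := List.count_eq_zero.1 (by omega)
  have hc2 : cyc (str :: w :: ζ) (str :: W₁) := by
    refine cyc_trans ?_ (by simpa [List.append_assoc] using hc)
    exact ⟨ζ, [str, w], rfl, rfl⟩
  exact cyc_align (by simp [hζ, Ne.symm hw]) hW hc2

theorem str_not_mem_WxT {l : List (Option D)} {c : Option D} {r : List (Option D)} :
    str ∉ (bl c :: (mb r ++ [tri] ++ mb l.reverse)) := by
  simp [str, bl, tri, mb]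

theorem str_not_mem_WiT {l : List (Option D)} : str ∉ (tri :: mb l.reverse) := by
  simp [str, tri, mb]

/- ---------- single steps of the queue automaton ---------- -/

theorem qp_step {st st' : S2 S D} {a : Option A} {h : Head (D2 D)} {δ q q' : List (D2 D)}
    (ht : QT M st a h δ st') (hs : QStep h δ q q') :
    (QQ M).proc.tr (st, q) a (st', q') := ⟨h, δ, ht, hs⟩

/- ---------- the seek rotation ---------- -/

theorem seek_run (s : S) :
    ∀ (z : List (D2 D)), str ∉ z → ∀ (y : List (D2 D)) (w : D2 D),
      ∃ w' y', (QQ M).proc.tauStar (skr s w, y ++ str :: z) (skr s w', y' ++ [str]) ∧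
        cyc (y' ++ [str, w']) (y ++ str :: (z ++ [w])) := by
  intro z
  induction z using List.reverseRecOn with
  | nil =>
    intro _ y w
    exact ⟨w, y, Relation.ReflTransGen.refl, by simpa using cyc_refl (y ++ [str, w])⟩
  | append_singleton z' x ih =>
    intro hz y w
    have hx : x ≠ str := fun h => hz (by simp [h])
    have hz' : str ∉ z' := fun h => hz (by simp [h])
    have step : (QQ M).proc.tr (skr s w, y ++ str :: (z' ++ [x])) none
        (skr s x, (w :: y) ++ str :: z') := by
      refine qp_step (QT.rot hx) ?_
      have h0 := QStep.data x [w] (y ++ str :: z')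
      simpa using h0
    obtain ⟨w', y', hts, hcyc⟩ := ih hz' (w :: y) x
    refine ⟨w', y', Relation.ReflTransGen.head step hts, ?_⟩
    refine cyc_trans hcyc ?_
    have h1 := cyc_rot (y ++ str :: (z' ++ [x])) [w]
    simpa [List.append_assoc] using h1


theorem cyc_of_eq {α : Type} {a b : List α} (h : a = b) : cyc a b := h ▸ cyc_refl a

/- ---------- successor configurations and their related queue configurations ---------- -/

theorem succL_rel (t : S) (l : List (Option D)) (e : Option D) (r : List (Option D)) :
    BRel M (t, l.tail, l.headD none, e :: r) (nrm t, bl e :: (mb r ++ [tri] ++ mb l.reverse)) := by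
  cases l with
  | nil => simpa [Bq, mb, bl, tri, str] using BRel.c2 (M := M) t (e :: r)
  | cons l0 lt => simpa [Enc, mb, bl, tri, str] using BRel.c1 (M := M) t lt l0 (e :: r)

theorem succR_rel (t : S) (l : List (Option D)) (e : Option D) (r : List (Option D)) :
    BRel M (t, e :: l, r.headD none, r.tail)
      (skr t (bl e), str :: (mb r ++ [tri] ++ mb l.reverse)) := by
  cases r with
  | nil =>
    refine BRel.c5 t (e :: l) (bl e) _ (bl_ne_str e) (cyc_of_eq ?_)
    simp [Wi, mb, bl, tri, str]
  | cons r0 rt =>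
    refine BRel.c4 t (e :: l) r0 rt (bl e) _ (bl_ne_str e) (cyc_of_eq ?_)
    simp [Wx, mb, bl, tri, str]

theorem succBL_rel (t : S) (e : Option D) (r : List (Option D)) :
    BRel M (t, [], none, e :: r) (skr t tri, str :: bl none :: bl e :: mb r) := by
  refine BRel.c4 t [] none (e :: r) tri _ tri_ne_str (cyc_of_eq ?_)
  simp [Wx, mb, bl, tri, str]

theorem succBR_rel (t : S) (e : Option D) (r : List (Option D)) :
    BRel M (t, [e], r.headD none, r.tail) (skr t tri, bl e :: str :: mb r) := by
  cases r with
  | nil =>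
    refine BRel.c5 t [e] tri _ tri_ne_str ⟨[str, tri], [bl e], ?_, ?_⟩
    · simp [Wi, mb, bl, tri, str]
    · simp [mb, bl, tri, str]
  | cons r0 rt =>
    refine BRel.c4 t [e] r0 rt tri _ tri_ne_str
      ⟨str :: bl r0 :: (mb rt ++ [tri]), [bl e], ?_, ?_⟩
    · simp [Wx, mb, bl, tri, str, List.append_assoc]
    · simp [mb, bl, tri, str]

/- ---------- reaching a ready configuration by internal steps ---------- -/

theorem toReady {s : S} {l : List (Option D)} {c : Option D} {r : List (Option D)}
    {st : S2 S D} {q : List (D2 D)} (hrel : BRel M (s, l, c, r) (st, q)) :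
    ∃ st' q', (QQ M).proc.tauStar (st, q) (st', q') ∧ BRel M (s, l, c, r) (st', q') ∧
      ((st' = nrm s ∧ q' = Enc l c r) ∨
       (st' = nrm s ∧ l = [] ∧ c = none ∧ q' = Bq r) ∨
       (st' = hld s c ∧ q' = Hq l r)) := by
  haveI : DecidableEq (D2 D) := Classical.decEq _
  cases hrel with
  | c0 =>
    refine ⟨nrm M.init, Enc [] none [], Relation.ReflTransGen.single
      (qp_step QT.init ?_), BRel.c1 _ _ _ _, Or.inl ⟨rfl, rfl⟩⟩
    rw [show Enc ([] : List (Option D)) none [] = [tri, bl none] from by simp [Enc, mb]]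
    exact QStep.emp _
  | c1 => exact ⟨_, _, Relation.ReflTransGen.refl, BRel.c1 _ _ _ _, Or.inl ⟨rfl, rfl⟩⟩
  | c2 => exact ⟨_, _, Relation.ReflTransGen.refl, BRel.c2 _ _, Or.inr (Or.inl ⟨rfl, rfl, rfl, rfl⟩)⟩
  | c3 => exact ⟨_, _, Relation.ReflTransGen.refl, BRel.c3 _ _ _ _, Or.inr (Or.inr ⟨rfl, rfl⟩)⟩
  | c4 s' l' c' r' w q hw hc =>
    have hW : str ∉ (bl c :: (mb r ++ [tri] ++ mb l.reverse)) := str_not_mem_WxT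
    have h0 : (bl c :: (mb r ++ [tri] ++ mb l.reverse)).count str = 0 :=
      List.count_eq_zero.2 hW
    have cmb1 : (mb r).count str = 0 := List.count_eq_zero.2 (str_not_mem_mb r)
    have cmb2 : (mb l.reverse).count str = 0 := List.count_eq_zero.2 (str_not_mem_mb l.reverse)
    have hcnt := cyc_count hc str
    rw [show Wx l c r = str :: (bl c :: (mb r ++ [tri] ++ mb l.reverse)) from rfl] at hcnt
    simp [List.count_append, List.count_cons, Ne.symm hw, hw, h0, cmb1, cmb2, tri_ne_str, bl_ne_str, beq_iff_eq] at hcnt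
    have hqmem : str ∈ q := List.count_pos_iff.1 (by omega)
    obtain ⟨y, z, rfl⟩ := List.append_of_mem hqmem
    have hz : str ∉ z := by
      simp [List.count_append, List.count_cons, beq_iff_eq] at hcnt
      exact List.count_eq_zero.1 (by omega)
    obtain ⟨w', y', hts, hcyc⟩ := seek_run (M := M) s z hz y w
    have hc2 : cyc (y' ++ [str, w']) (Wx l c r) := by
      refine cyc_trans hcyc (cyc_trans (cyc_of_eq ?_) hc)
      simp
    have hw' : w' ≠ str ∧ str ∉ y' := by
      have hcnt2 := cyc_count hc2 str
      rw [show Wx l c r = str :: (bl c :: (mb r ++ [tri] ++ mb l.reverse)) from rfl] at hcnt2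
      simp [List.count_append, List.count_cons, h0, cmb1, cmb2, tri_ne_str, bl_ne_str, beq_iff_eq] at hcnt2
      have hws : w' ≠ str := by
        intro hww; rw [hww] at hcnt2; simp at hcnt2
      refine ⟨hws, List.count_eq_zero.1 ?_⟩
      simp [hws] at hcnt2
      omega
    have halign : w' :: y' = bl c :: (mb r ++ [tri] ++ mb l.reverse) := by
      refine star_align hW hw'.1 (ζ := y') ?_
      simpa [Wx, Wi] using hc2
    have hweq : w' = bl c := (List.cons.injEq _ _ _ _ ▸ halign).1
    have hyeq : y' = mb r ++ [tri] ++ mb l.reverse := (List.cons.injEq _ _ _ _ ▸ halign).2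
    refine ⟨hld s c, Hq l r, ?_, BRel.c3 _ _ _ _, Or.inr (Or.inr ⟨rfl, rfl⟩)⟩
    refine Relation.ReflTransGen.tail hts ?_
    rw [hweq, hyeq]
    have hstep := qp_step (M := M) (QT.cap (s := s) (d := c))
      (QStep.data str [] (mb r ++ [tri] ++ mb l.reverse))
    simpa [Hq, List.append_assoc] using hstep
  | c5 s' l' w q hw hc =>
    have hW : str ∉ (tri :: mb l.reverse) := str_not_mem_WiT
    have h0 : (tri :: mb l.reverse).count str = 0 := List.count_eq_zero.2 hW
    have cmb2 : (mb l.reverse).count str = 0 := List.count_eq_zero.2 (str_not_mem_mb l.reverse)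
    have cmb1 : (mb (l.reverse)).count str = 0 := cmb2
    have hcnt := cyc_count hc str
    rw [show Wi l = str :: (tri :: mb l.reverse) from rfl] at hcnt
    simp [List.count_append, List.count_cons, Ne.symm hw, hw, h0, cmb1, cmb2, tri_ne_str, bl_ne_str, beq_iff_eq] at hcnt
    have hqmem : str ∈ q := List.count_pos_iff.1 (by omega)
    obtain ⟨y, z, rfl⟩ := List.append_of_mem hqmem
    have hz : str ∉ z := by
      simp [List.count_append, List.count_cons, beq_iff_eq] at hcnt
      exact List.count_eq_zero.1 (by omega)
    obtain ⟨w', y', hts, hcyc⟩ := seek_run (M := M) s z hz y w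
    have hc2 : cyc (y' ++ [str, w']) (Wi l) := by
      refine cyc_trans hcyc (cyc_trans (cyc_of_eq ?_) hc)
      simp
    have hw' : w' ≠ str ∧ str ∉ y' := by
      have hcnt2 := cyc_count hc2 str
      rw [show Wi l = str :: (tri :: mb l.reverse) from rfl] at hcnt2
      simp [List.count_append, List.count_cons, h0, cmb1, cmb2, tri_ne_str, bl_ne_str, beq_iff_eq] at hcnt2
      have hws : w' ≠ str := by
        intro hww; rw [hww] at hcnt2; simp at hcnt2
      refine ⟨hws, List.count_eq_zero.1 ?_⟩
      simp [hws] at hcnt2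
      omega
    have halign : w' :: y' = tri :: mb l.reverse := by
      refine star_align hW hw'.1 (ζ := y') ?_
      simpa [Wx, Wi] using hc2
    have hweq : w' = tri := (List.cons.injEq _ _ _ _ ▸ halign).1
    have hyeq : y' = mb l.reverse := (List.cons.injEq _ _ _ _ ▸ halign).2
    refine ⟨hld s none, Hq l [], ?_, BRel.c3 _ _ _ _, Or.inr (Or.inr ⟨rfl, rfl⟩)⟩
    refine Relation.ReflTransGen.tail hts ?_
    rw [hweq, hyeq]
    have hstep := qp_step (M := M) (QT.capb (s := s)) (QStep.data str [tri] (mb l.reverse))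
    simpa [Hq, mb, List.append_assoc] using hstep

theorem Enc_snoc (l : List (Option D)) (c : Option D) (r : List (Option D)) :
    Enc l c r = (mb r ++ [tri] ++ mb l.reverse) ++ [bl c] := by
  simp [Enc, List.append_assoc]

/- ---------- visible move from a ready configuration ---------- -/

theorem moveReady {s : S} {l : List (Option D)} {c : Option D} {r : List (Option D)}
    {a : Option A} {σ' : S × List (Option D) × Option D × List (Option D)}
    (hstep : M.proc.tr (s, l, c, r) a σ') {st : S2 S D} {q : List (D2 D)}
    (hready : (st = nrm s ∧ q = Enc l c r) ∨
      (st = nrm s ∧ l = [] ∧ c = none ∧ q = Bq r) ∨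
      (st = hld s c ∧ q = Hq l r)) :
    ∃ τ', (QQ M).proc.tr (st, q) a τ' ∧ BRel M σ' τ' := by
  obtain ⟨t, l', c', r'⟩ := σ'
  obtain ⟨e, hcase⟩ := hstep
  rcases hcase with ⟨htr, h1, h2, h3⟩ | ⟨htr, h1, h2, h3⟩ <;>
    simp only at h1 h2 h3 <;> subst h1 <;> subst h2 <;> subst h3
  · -- left move
    rcases hready with ⟨hst, hq⟩ | ⟨hst, hl, hc, hq⟩ | ⟨hst, hq⟩ <;> subst hst <;> subst hq
    · refine ⟨(nrm t, bl e :: (mb r ++ [tri] ++ mb l.reverse)), ?_, succL_rel t l e r⟩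
      refine qp_step (QT.lf htr) ?_
      rw [show Enc l c r = (mb r ++ [tri] ++ mb l.reverse) ++ [bl c] from by
        simp [Enc, List.append_assoc]]
      exact QStep.data _ _ _
    · subst hl; subst hc
      refine ⟨(skr t tri, str :: bl none :: bl e :: mb r), ?_, succBL_rel t e r⟩
      refine qp_step (QT.blf htr) ?_
      rw [show Bq r = mb r ++ [tri] from rfl]
      exact QStep.data _ _ _
    · refine ⟨(nrm t, bl e :: (mb r ++ [tri] ++ mb l.reverse)), ?_, succL_rel t l e r⟩
      exact qp_step (QT.hlf htr) (QStep.star _ _)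
  · -- right move
    rcases hready with ⟨hst, hq⟩ | ⟨hst, hl, hc, hq⟩ | ⟨hst, hq⟩ <;> subst hst <;> subst hq
    · refine ⟨(skr t (bl e), str :: (mb r ++ [tri] ++ mb l.reverse)), ?_, succR_rel t l e r⟩
      refine qp_step (QT.rt htr) ?_
      rw [show Enc l c r = (mb r ++ [tri] ++ mb l.reverse) ++ [bl c] from by
        simp [Enc, List.append_assoc]]
      exact QStep.data _ _ _
    · subst hl; subst hc
      refine ⟨(skr t tri, bl e :: str :: mb r), ?_, succBR_rel t e r⟩
      refine qp_step (QT.brt htr) ?_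
      rw [show Bq r = mb r ++ [tri] from rfl]
      exact QStep.data _ _ _
    · refine ⟨(skr t (bl e), str :: (mb r ++ [tri] ++ mb l.reverse)), ?_, succR_rel t l e r⟩
      exact qp_step (QT.hrt htr) (QStep.star _ _)

/- ---------- matching a queue automaton step by the machine ---------- -/

theorem backward {s : S} {l : List (Option D)} {c : Option D} {r : List (Option D)}
    {st : S2 S D} {q : List (D2 D)} {a : Option A} {st₂ : S2 S D} {q₂ : List (D2 D)}
    (hrel : BRel M (s, l, c, r) (st, q)) (hQ : (QQ M).proc.tr (st, q) a (st₂, q₂)) :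
    ∃ σ', M.proc.optStep (s, l, c, r) a σ' ∧ BRel M σ' (st₂, q₂) := by
  obtain ⟨h, δ, hQT, hQS⟩ := hQ
  dsimp only at hQT hQS
  cases hrel with
  | c0 =>
    cases hQT
    obtain ⟨-, hq2⟩ := QStep_emp_inv hQS
    subst hq2
    refine ⟨(M.init, [], none, []), Or.inr ⟨rfl, rfl⟩, ?_⟩
    simpa [Enc, mb, bl, tri, str] using BRel.c1 (M := M) M.init [] none []
  | c1 =>
    cases hQT with
    | lf htr =>
      obtain ⟨ζ, hζ, hq2⟩ := QStep_data_inv hQS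
      rw [Enc_snoc] at hζ
      obtain ⟨hζeq, hbc⟩ := snoc_inj hζ
      have hc0 : c = _ := Sum.inl.inj hbc
      subst hc0
      refine ⟨(_, l.tail, l.headD none, _ :: r), Or.inl ⟨_, Or.inl ⟨htr, rfl, rfl, rfl⟩⟩, ?_⟩
      rw [hq2, ← hζeq]
      exact succL_rel _ l _ r
    | rt htr =>
      obtain ⟨ζ, hζ, hq2⟩ := QStep_data_inv hQS
      rw [Enc_snoc] at hζ
      obtain ⟨hζeq, hbc⟩ := snoc_inj hζ
      have hc0 : c = _ := Sum.inl.inj hbc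
      subst hc0
      refine ⟨(_, _ :: l, r.headD none, r.tail), Or.inl ⟨_, Or.inr ⟨htr, rfl, rfl, rfl⟩⟩, ?_⟩
      rw [hq2, ← hζeq]
      exact succR_rel _ l _ r
    | blf htr =>
      obtain ⟨ζ, hζ, hq2⟩ := QStep_data_inv hQS
      rw [Enc_snoc] at hζ
      obtain ⟨-, hbc⟩ := snoc_inj hζ
      exact absurd hbc (bl_ne_tri c)
    | brt htr =>
      obtain ⟨ζ, hζ, hq2⟩ := QStep_data_inv hQS
      rw [Enc_snoc] at hζ
      obtain ⟨-, hbc⟩ := snoc_inj hζ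
      exact absurd hbc (bl_ne_tri c)
  | c2 =>
    cases hQT with
    | lf htr =>
      obtain ⟨ζ, hζ, hq2⟩ := QStep_data_inv hQS
      simp only [Bq] at hζ
      obtain ⟨-, hbc⟩ := snoc_inj hζ
      exact absurd hbc.symm (bl_ne_tri _)
    | rt htr =>
      obtain ⟨ζ, hζ, hq2⟩ := QStep_data_inv hQS
      simp only [Bq] at hζ
      obtain ⟨-, hbc⟩ := snoc_inj hζ
      exact absurd hbc.symm (bl_ne_tri _)
    | blf htr =>
      obtain ⟨ζ, hζ, hq2⟩ := QStep_data_inv hQS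
      simp only [Bq] at hζ
      obtain ⟨hζeq, -⟩ := snoc_inj hζ
      refine ⟨(_, [], none, _ :: r), Or.inl ⟨_, Or.inl ⟨htr, rfl, rfl, rfl⟩⟩, ?_⟩
      rw [hq2, ← hζeq]
      exact succBL_rel _ _ r
    | brt htr =>
      obtain ⟨ζ, hζ, hq2⟩ := QStep_data_inv hQS
      simp only [Bq] at hζ
      obtain ⟨hζeq, -⟩ := snoc_inj hζ
      refine ⟨(_, [_], r.headD none, r.tail), Or.inl ⟨_, Or.inr ⟨htr, rfl, rfl, rfl⟩⟩, ?_⟩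
      rw [hq2, ← hζeq]
      exact succBR_rel _ _ r
  | c3 =>
    cases hQT with
    | hlf htr =>
      have hq2 := QStep_star_inv hQS
      refine ⟨(_, l.tail, l.headD none, _ :: r), Or.inl ⟨_, Or.inl ⟨htr, rfl, rfl, rfl⟩⟩, ?_⟩
      rw [hq2]
      exact succL_rel _ l _ r
    | hrt htr =>
      have hq2 := QStep_star_inv hQS
      refine ⟨(_, _ :: l, r.headD none, r.tail), Or.inl ⟨_, Or.inr ⟨htr, rfl, rfl, rfl⟩⟩, ?_⟩
      rw [hq2]
      exact succR_rel _ l _ r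
  | c4 s' l' c' r' w q hw hc =>
    cases hQT with
    | rot hx =>
      rename_i x
      obtain ⟨ζ, hζ, hq2⟩ := QStep_data_inv hQS
      subst hζ
      refine ⟨(s, l, c, r), Or.inr ⟨rfl, rfl⟩, BRel.c4 s l c r x _ hx ?_⟩
      rw [hq2]
      exact cyc_trans ⟨ζ ++ [x], [w], rfl, by simp⟩ hc
    | cap =>
      rename_i d
      obtain ⟨ζ, hζ, hq2⟩ := QStep_data_inv hQS
      subst hζ
      have hc' : cyc ((ζ ++ [str]) ++ [bl d]) (str :: (bl c :: (mb r ++ [tri] ++ mb l.reverse))) := hc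
      have halign := star_align (str_not_mem_WxT (l := l) (c := c) (r := r)) hw hc'
      have hbc := (List.cons_eq_cons.1 halign).1
      have hζeq := (List.cons_eq_cons.1 halign).2
      have hd : _ = c := Sum.inl.inj hbc
      refine ⟨(s, l, c, r), Or.inr ⟨rfl, rfl⟩, ?_⟩
      rw [hq2, hζeq, hd]
      simpa [Hq] using BRel.c3 (M := M) s l c r
    | capb =>
      obtain ⟨ζ, hζ, hq2⟩ := QStep_data_inv hQS
      subst hζ
      have hc' : cyc ((ζ ++ [str]) ++ [tri]) (str :: (bl c :: (mb r ++ [tri] ++ mb l.reverse))) := hc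
      have halign := star_align (str_not_mem_WxT (l := l) (c := c) (r := r)) hw hc'
      exact absurd (List.cons_eq_cons.1 halign).1.symm (bl_ne_tri c)
  | c5 s' l' w q hw hc =>
    cases hQT with
    | rot hx =>
      rename_i x
      obtain ⟨ζ, hζ, hq2⟩ := QStep_data_inv hQS
      subst hζ
      refine ⟨(s, l, none, []), Or.inr ⟨rfl, rfl⟩, BRel.c5 s l x _ hx ?_⟩
      rw [hq2]
      exact cyc_trans ⟨ζ ++ [x], [w], rfl, by simp⟩ hc
    | cap =>
      rename_i d
      obtain ⟨ζ, hζ, hq2⟩ := QStep_data_inv hQS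
      subst hζ
      have hc' : cyc ((ζ ++ [str]) ++ [bl d]) (str :: (tri :: mb l.reverse)) := hc
      have halign := star_align (str_not_mem_WiT (l := l)) hw hc'
      exact absurd (List.cons_eq_cons.1 halign).1 (bl_ne_tri _)
    | capb =>
      obtain ⟨ζ, hζ, hq2⟩ := QStep_data_inv hQS
      subst hζ
      have hc' : cyc ((ζ ++ [str]) ++ [tri]) (str :: (tri :: mb l.reverse)) := hc
      have halign := star_align (str_not_mem_WiT (l := l)) hw hc'
      have hζeq := (List.cons_eq_cons.1 halign).2
      refine ⟨(s, l, none, []), Or.inr ⟨rfl, rfl⟩, ?_⟩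
      rw [hq2, hζeq]
      simpa [Hq, mb] using BRel.c3 (M := M) s l none []

instance {α : Type} [Finite α] : Finite (Option α) := by
  refine Finite.of_injective (fun o : Option α => match o with
    | none => (Sum.inr () : α ⊕ Unit)
    | some a => Sum.inl a) ?_
  intro x y hxy
  cases x <;> cases y <;> simp_all

instance {D' : Type} [Finite D'] : Finite (Head D') := by
  refine Finite.of_injective (fun h => match h with
    | Head.emp => (Sum.inl true : Sum Bool D')
    | Head.star => Sum.inl false
    | Head.data d => Sum.inr d) ?_
  intro x y hxy
  cases x <;> cases y <;> simp_all

end RTMQueue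

/-- For every reactive Turing machine there exists a queue
automaton whose process graph is branching bisimilar to the process graph
associated with the RTM. -/
theorem rtm_to_queue_automaton {S A D : Type} [Finite S] [Finite A] [Finite D]
    (M : RTM S A D) (hM : M.FiniteTrans) :
    ∃ (S' D' : Type) (_ : Finite S') (_ : Finite D') (Q : QA S' A D'),
      Q.FiniteTrans ∧
      BBisimSys M.proc (M.init, [], none, []) Q.proc (Q.init, []) := by
  refine ⟨S2 S D, D2 D, inferInstance, inferInstance, QQ M, ?_, ?_⟩
  · -- finitely many transitions
    apply Set.Finite.subset
      (Set.Finite.prod Set.finite_univ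
        (Set.Finite.prod Set.finite_univ
          (Set.Finite.prod Set.finite_univ
            (Set.Finite.prod (List.finite_length_le (D2 D) 3) Set.finite_univ))))
    rintro ⟨s1, a, h, δ, s2⟩ hx
    simp only [Set.mem_setOf_eq] at hx
    refine ⟨Set.mem_univ _, Set.mem_univ _, Set.mem_univ _, ?_, Set.mem_univ _⟩
    show δ.length ≤ 3
    cases hx <;> simp
  · -- branching bisimulation
    refine ⟨BRel M, ⟨?_, ?_⟩, BRel.c0⟩
    · rintro ⟨s, l, c, r⟩ ⟨st, q⟩ hrel
      constructor
      · intro a σ' hstep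
        obtain ⟨st', q', hts, hrel', hready⟩ := toReady hrel
        obtain ⟨τ', htr, hrel''⟩ := moveReady hstep hready
        exact ⟨(st', q'), τ', hts, Or.inl htr, hrel', hrel''⟩
      · intro hfin
        obtain ⟨st', q', hts, hrel', hready⟩ := toReady hrel
        refine ⟨(st', q'), hts, ?_⟩
        rcases hready with ⟨h1, -⟩ | ⟨h1, -⟩ | ⟨h1, -⟩ <;> rw [h1] <;> exact hfin
    · rintro ⟨s, l, c, r⟩ ⟨st, q⟩ hrel
      constructor
      · rintro a ⟨st₂, q₂⟩ hQ
        obtain ⟨σ', hopt, hrel'⟩ := backward hrel hQ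
        exact ⟨(s, l, c, r), σ', Relation.ReflTransGen.refl, hopt, hrel, hrel'⟩
      · intro hfin
        refine ⟨(s, l, c, r), Relation.ReflTransGen.refl, ?_⟩
        cases hrel with
        | c0 => exact hfin.elim
        | c1 => exact hfin
        | c2 => exact hfin
        | c3 => exact hfin
        | c4 s' l' c' r' w q hw hc => exact hfin.elim
        | c5 s' l' w q hw hc => exact hfin.elim
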